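/- For the scalar simplicial SIS model f(y) = -γy + β₁(1-y)y + β₂(1-y)y² with γ, β₁, β₂ > 0: if β₁/γ > 1 then f(y) = 0 has a unique root ν₊ in (0,1], and f(y) > 0 for y ∈ (0, ν₊) while f(y) < 0 for y ∈ (ν₊, 1]. -/

import Mathlib

/-- Endemic domain of the scalar simplicial SIS model: if `β₁/γ > 1`, then
`f(y) = -γy + β₁(1-y)y + β₂(1-y)y²` has a unique root `ν₊` in `(0,1]`,
`f > 0` on `(0,ν₊)` and `f < 0` on `(ν₊,1]`. -/
theorem scalar_endemic_unique_root (γ β₁ β₂ : ℝ) (hγ : 0 < γ) (hβ₂ : 0 < β₂)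
    (h : 1 < β₁ / γ) :
    let f : ℝ → ℝ := fun y => -γ * y + β₁ * (1 - y) * y + β₂ * (1 - y) * y ^ 2
    let νp := (1 / 2) * (1 - β₁ / β₂) +
      (1 / (2 * β₂)) * Real.sqrt ((β₁ - β₂) ^ 2 - 4 * β₂ * (γ - β₁))
    f νp = 0 ∧ νp ∈ Set.Ioc (0 : ℝ) 1 ∧
      (∀ y ∈ Set.Ioc (0 : ℝ) 1, f y = 0 → y = νp) ∧
      (∀ y ∈ Set.Ioo (0 : ℝ) νp, 0 < f y) ∧
      (∀ y ∈ Set.Ioc νp 1, f y < 0) := by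
  intro f νp
  have hβ₁γ : γ < β₁ := (one_lt_div hγ).mp h
  have hβ₂' : β₂ ≠ 0 := ne_of_gt hβ₂
  have hD : 0 < (β₁ - β₂) ^ 2 - 4 * β₂ * (γ - β₁) := by
    nlinarith [sq_nonneg (β₁ - β₂)]
  set s := Real.sqrt ((β₁ - β₂) ^ 2 - 4 * β₂ * (γ - β₁)) with hsdef
  have hs0 : 0 ≤ s := Real.sqrt_nonneg _
  have hs2 : s ^ 2 = (β₁ - β₂) ^ 2 - 4 * β₂ * (γ - β₁) := Real.sq_sqrt hD.le
  have hνp : νp = (β₂ - β₁ + s) / (2 * β₂) := by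
    show (1 / 2) * (1 - β₁ / β₂) + (1 / (2 * β₂)) * s = _
    field_simp
  have hgt : β₂ - β₁ < s := by nlinarith
  have hgt2 : β₁ - β₂ < s := by nlinarith
  have hlt : s < β₁ + β₂ := by nlinarith
  set νm := (β₂ - β₁ - s) / (2 * β₂) with hνmdef
  have hνm : νm < 0 := div_neg_of_neg_of_pos (by linarith) (by linarith)
  have hνp0 : 0 < νp := by
    rw [hνp]; exact div_pos (by linarith) (by linarith)
  have hνp1 : νp ≤ 1 := by
    rw [hνp, div_le_one (by linarith)]; linarith
  have hsum : β₂ * (νp + νm) = β₂ - β₁ := by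
    rw [hνp, hνmdef]; field_simp; ring
  have hprod : β₂ * (νp * νm) = γ - β₁ := by
    rw [hνp, hνmdef]
    field_simp
    ring_nf
    linear_combination (-1 : ℝ) * hs2
  have hfact : ∀ y : ℝ, f y = y * (β₂ * (νp - y) * (y - νm)) := by
    intro y
    show -γ * y + β₁ * (1 - y) * y + β₂ * (1 - y) * y ^ 2 = _
    linear_combination (-(y ^ 2)) * hsum + y * hprod
  have hroot : f νp = 0 := by rw [hfact]; ring
  refine ⟨hroot, ⟨hνp0, hνp1⟩, ?_, ?_, ?_⟩
  · rintro y ⟨hy0, hy1⟩ hfy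
    rw [hfact] at hfy
    have h1 : y ≠ 0 := ne_of_gt hy0
    have h2 : y - νm ≠ 0 := ne_of_gt (by linarith)
    have h3 : β₂ * (νp - y) * (y - νm) = 0 := by
      rcases mul_eq_zero.mp hfy with h' | h'
      · exact absurd h' h1
      · exact h'
    rcases mul_eq_zero.mp h3 with h' | h'
    · rcases mul_eq_zero.mp h' with h'' | h''
      · exact absurd h'' hβ₂'
      · linarith
    · exact absurd h' h2
  · rintro y ⟨hy0, hy1⟩
    rw [hfact]
    exact mul_pos hy0 (mul_pos (mul_pos hβ₂ (by linarith)) (by linarith))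
  · rintro y ⟨hy0, hy1⟩
    rw [hfact]
    have hy : 0 < y := lt_trans hνp0 hy0
    exact mul_neg_of_pos_of_neg hy
      (mul_neg_of_neg_of_pos (mul_neg_of_pos_of_neg hβ₂ (by linarith)) (by linarith))
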